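/- Let n ≥ 2, G = ℍⁿ \ {eₙ}, where ℍⁿ = {x ∈ ℝⁿ : xₙ > 0} and eₙ is the n-th standard basis vector, let x ∈ G and r ∈ (0, 1/2]. Then the metric ball B_s(x,r) = {y ∈ G : s_G(x,y) < r} is a convex subset of ℝⁿ. -/

import Mathlib

/-- The triangular ratio metric `s_G(x,y) = sup_{z ∈ ∂G} |x−y|/(|z−x|+|z−y|)`. -/
noncomputable def sMetric {n : ℕ} (G : Set (EuclideanSpace ℝ (Fin n)))
    (x y : EuclideanSpace ℝ (Fin n)) : ℝ :=
  ⨆ z ∈ frontier G, dist x y / (dist z x + dist z y)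

/-- The metric ball `B_s(x,r) = {y ∈ G : s_G(x,y) < r}`. -/
def sBall {n : ℕ} (G : Set (EuclideanSpace ℝ (Fin n))) (x : EuclideanSpace ℝ (Fin n))
    (r : ℝ) : Set (EuclideanSpace ℝ (Fin n)) :=
  {y ∈ G | sMetric G x y < r}


open scoped RealInnerProductSpace

variable {E : Type*} [NormedAddCommGroup E] [InnerProductSpace ℝ E]

/-- expansion of squared distance around a base point -/
lemma dist_sq_expand (x e y : E) :
    dist x y ^ 2 = dist e x ^ 2 - 2 * ⟪x - e, y - e⟫ + dist e y ^ 2 := by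
  rw [dist_eq_norm, dist_eq_norm, dist_eq_norm]
  have h : x - y = (x - e) - (y - e) := by abel
  rw [h, norm_sub_sq_real, norm_sub_rev e x, norm_sub_rev e y]

lemma dist_combo_sq (a u v : E) (t s : ℝ) (h : t + s = 1) :
    dist a (t • u + s • v) ^ 2
      = t * dist a u ^ 2 + s * dist a v ^ 2 - t * s * dist u v ^ 2 := by
  have key : a - (t • u + s • v) = t • (a - u) + s • (a - v) := by
    rw [smul_sub, smul_sub, sub_add_sub_comm, ← add_smul, h, one_smul]
  have huv : u - v = (a - v) - (a - u) := by abel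
  simp only [dist_eq_norm]
  rw [huv, key]
  rw [← real_inner_self_eq_norm_sq, ← real_inner_self_eq_norm_sq,
    ← real_inner_self_eq_norm_sq, ← real_inner_self_eq_norm_sq]
  simp only [inner_add_left, inner_add_right, inner_sub_left, inner_sub_right,
    real_inner_smul_left, real_inner_smul_right]
  obtain rfl : s = 1 - t := by linarith
  rw [real_inner_comm u a, real_inner_comm v a, real_inner_comm v u]
  ring

lemma combo_pos {A B t s : ℝ} (hA : 0 < A) (hB : 0 < B) (ht : 0 ≤ t) (hs : 0 ≤ s)
    (hts : t + s = 1) : 0 < t * A + s * B := by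
  rcases eq_or_lt_of_le ht with h | h
  · rw [← h] at hts ⊢; simp at hts; simp [hts]; linarith
  · exact add_pos_of_pos_of_nonneg (mul_pos h hA) (mul_nonneg hs hB.le)

/-- Convexity of an "Apollonius-type" strict sublevel set. -/
lemma convexC1 (x c : E) (r : ℝ) (hr0 : 0 < r) (hr1 : r ≤ 1) :
    Convex ℝ {y : E | dist x y < r * dist c y} := by
  intro y₁ h₁ y₂ h₂ t s ht hs hts
  simp only [Set.mem_setOf_eq] at h₁ h₂ ⊢
  have hs₁ : dist x y₁ ^ 2 < r ^ 2 * dist c y₁ ^ 2 := by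
    have := pow_lt_pow_left₀ h₁ dist_nonneg (two_ne_zero)
    calc dist x y₁ ^ 2 < (r * dist c y₁) ^ 2 := this
    _ = r ^ 2 * dist c y₁ ^ 2 := by ring
  have hs₂ : dist x y₂ ^ 2 < r ^ 2 * dist c y₂ ^ 2 := by
    have := pow_lt_pow_left₀ h₂ dist_nonneg (two_ne_zero)
    calc dist x y₂ ^ 2 < (r * dist c y₂) ^ 2 := this
    _ = r ^ 2 * dist c y₂ ^ 2 := by ring
  have e1 := dist_combo_sq x y₁ y₂ t s hts
  have e2 := dist_combo_sq c y₁ y₂ t s hts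
  have hsq : dist x (t • y₁ + s • y₂) ^ 2 < r ^ 2 * dist c (t • y₁ + s • y₂) ^ 2 := by
    have hcomb : 0 < t * (r ^ 2 * dist c y₁ ^ 2 - dist x y₁ ^ 2)
        + s * (r ^ 2 * dist c y₂ ^ 2 - dist x y₂ ^ 2) :=
      combo_pos (by linarith) (by linarith) ht hs hts
    have hd12 : 0 ≤ t * s * dist y₁ y₂ ^ 2 * (1 - r ^ 2) := by
      have : 0 ≤ 1 - r ^ 2 := by nlinarith
      positivity
    nlinarith [e1, e2]
  have hc : 0 < dist c (t • y₁ + s • y₂) := by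
    by_contra hcon
    push_neg at hcon
    have : dist c (t • y₁ + s • y₂) = 0 := le_antisymm hcon dist_nonneg
    rw [this] at hsq
    nlinarith [dist_nonneg (x := x) (y := t • y₁ + s • y₂)]
  have : dist x (t • y₁ + s • y₂) ^ 2 < (r * dist c (t • y₁ + s • y₂)) ^ 2 := by
    calc dist x (t • y₁ + s • y₂) ^ 2 < r ^ 2 * dist c (t • y₁ + s • y₂) ^ 2 := hsq
    _ = (r * dist c (t • y₁ + s • y₂)) ^ 2 := by ring
  exact lt_of_pow_lt_pow_left₀ 2 (by positivity) this

set_option maxHeartbeats 1000000 in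
/-- Convexity of the Cartesian-oval-type sublevel set, for `r ≤ 1/2`. -/

lemma convexC2 (x e : E) (r : ℝ) (hr0 : 0 < r) (hr2 : r ≤ 1 / 2) (hxe : x ≠ e) :
    Convex ℝ {y : E | dist x y < r * (dist e x + dist e y)} := by
  intro y₁ h₁ y₂ h₂ t s ht hs hts
  obtain rfl : s = 1 - t := by linarith
  have ht1 : t ≤ 1 := by linarith
  simp only [Set.mem_setOf_eq] at h₁ h₂ ⊢
  set d : ℝ := dist e x with hd
  have hdpos : 0 < d := dist_pos.mpr (Ne.symm hxe)
  set a₁ : ℝ := dist e y₁ with ha₁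
  set a₂ : ℝ := dist e y₂ with ha₂
  have ha₁0 : 0 ≤ a₁ := dist_nonneg
  have ha₂0 : 0 ≤ a₂ := dist_nonneg
  set φ₁ : ℝ := ⟪x - e, y₁ - e⟫ with hφ₁
  set φ₂ : ℝ := ⟪x - e, y₂ - e⟫ with hφ₂
  have h1r : (0:ℝ) < 1 - r := by linarith
  -- squared form of the hypotheses
  have key₁ : 2 * φ₁ > (1 - r ^ 2) * a₁ ^ 2 - 2 * r ^ 2 * d * a₁ + (1 - r ^ 2) * d ^ 2 := by
    have hsq := pow_lt_pow_left₀ h₁ dist_nonneg (two_ne_zero)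
    have hexp := dist_sq_expand x e y₁
    linarith [hsq, hexp]
  have key₂ : 2 * φ₂ > (1 - r ^ 2) * a₂ ^ 2 - 2 * r ^ 2 * d * a₂ + (1 - r ^ 2) * d ^ 2 := by
    have hsq := pow_lt_pow_left₀ h₂ dist_nonneg (two_ne_zero)
    have hexp := dist_sq_expand x e y₂
    linarith [hsq, hexp]
  -- half-space bound: (1+r) φ > r d²
  have hφ₁pos : (1 + r) * φ₁ > r * d ^ 2 := by
    have hk : (1 - r) * (1 + r) * (2 * φ₁)
        > (1 - r) * (1 + r) * ((1 - r ^ 2) * a₁ ^ 2 - 2 * r ^ 2 * d * a₁ + (1 - r ^ 2) * d ^ 2) :=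
      mul_lt_mul_of_pos_left key₁ (by nlinarith)
    nlinarith [hk, sq_nonneg ((1 - r ^ 2) * a₁ - r ^ 2 * d),
      mul_nonneg (by linarith : (0:ℝ) ≤ 1 - 2 * r) (sq_nonneg d),
      (by linarith : (0:ℝ) < 2 * (1 - r))]
  have hφ₂pos : (1 + r) * φ₂ > r * d ^ 2 := by
    have hk : (1 - r) * (1 + r) * (2 * φ₂)
        > (1 - r) * (1 + r) * ((1 - r ^ 2) * a₂ ^ 2 - 2 * r ^ 2 * d * a₂ + (1 - r ^ 2) * d ^ 2) :=
      mul_lt_mul_of_pos_left key₂ (by nlinarith)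
    nlinarith [hk, sq_nonneg ((1 - r ^ 2) * a₂ - r ^ 2 * d),
      mul_nonneg (by linarith : (0:ℝ) ≤ 1 - 2 * r) (sq_nonneg d),
      (by linarith : (0:ℝ) < 2 * (1 - r))]
  set yt : E := t • y₁ + (1 - t) • y₂ with hyt
  have hyte : yt - e = t • (y₁ - e) + (1 - t) • (y₂ - e) := by
    rw [smul_sub, smul_sub, sub_add_sub_comm, ← add_smul]
    norm_num [hyt]
  set at' : ℝ := dist e yt with hat'
  have hat'0 : 0 ≤ at' := dist_nonneg
  have hφt : ⟪x - e, yt - e⟫ = t * φ₁ + (1 - t) * φ₂ := by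
    rw [hyte, inner_add_right, real_inner_smul_right, real_inner_smul_right]
  have hCS : t * φ₁ + (1 - t) * φ₂ ≤ d * at' := by
    rw [← hφt]
    calc ⟪x - e, yt - e⟫ ≤ ‖x - e‖ * ‖yt - e‖ := real_inner_le_norm _ _
    _ = d * at' := by rw [← dist_eq_norm, ← dist_eq_norm, dist_comm x e, dist_comm yt e]
  have hatle : at' ≤ t * a₁ + (1 - t) * a₂ := by
    have h0 : at' = ‖t • (y₁ - e) + (1 - t) • (y₂ - e)‖ := by
      rw [hat', dist_comm, dist_eq_norm, hyte]
    rw [h0, ha₁, ha₂, dist_comm e y₁, dist_comm e y₂, dist_eq_norm, dist_eq_norm]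
    calc ‖t • (y₁ - e) + (1 - t) • (y₂ - e)‖
        ≤ ‖t • (y₁ - e)‖ + ‖(1 - t) • (y₂ - e)‖ := norm_add_le _ _
    _ = t * ‖y₁ - e‖ + (1 - t) * ‖y₂ - e‖ := by
        rw [norm_smul, norm_smul, Real.norm_of_nonneg ht, Real.norm_of_nonneg hs]
  have hφtpos : r * d ^ 2 < (1 + r) * (t * φ₁ + (1 - t) * φ₂) := by
    have h := combo_pos (sub_pos.mpr hφ₁pos) (sub_pos.mpr hφ₂pos) ht hs (by ring)
    linarith [h]
  have h6 : r * d < (1 + r) * at' := by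
    have hle : (1 + r) * (t * φ₁ + (1 - t) * φ₂) ≤ (1 + r) * (d * at') :=
      mul_le_mul_of_nonneg_left hCS (by linarith)
    nlinarith [hφtpos, hle, hdpos]
  have h7 : r ^ 2 * d < (1 - r ^ 2) * at' := by
    have hm := mul_lt_mul_of_pos_left h6 h1r
    nlinarith [hm, mul_nonneg (mul_nonneg hr0.le hdpos.le) (by linarith : (0:ℝ) ≤ 1 - 2 * r)]
  have hrtpos : 0 < r * (d + at') := mul_pos hr0 (by linarith)
  have hgoal_sq : dist x yt ^ 2 < (r * (d + at')) ^ 2 := by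
    have hexp := dist_sq_expand x e yt
    rw [hφt] at hexp
    have hA1 : (0:ℝ) < 2 * φ₁ - ((1 - r ^ 2) * a₁ ^ 2 - 2 * r ^ 2 * d * a₁ + (1 - r ^ 2) * d ^ 2) := by
      linarith
    have hA2 : (0:ℝ) < 2 * φ₂ - ((1 - r ^ 2) * a₂ ^ 2 - 2 * r ^ 2 * d * a₂ + (1 - r ^ 2) * d ^ 2) := by
      linarith
    have hA := combo_pos hA1 hA2 ht hs (by ring)
    have step1 : t * ((1 - r ^ 2) * a₁ ^ 2 - 2 * r ^ 2 * d * a₁ + (1 - r ^ 2) * d ^ 2)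
        + (1 - t) * ((1 - r ^ 2) * a₂ ^ 2 - 2 * r ^ 2 * d * a₂ + (1 - r ^ 2) * d ^ 2)
        < 2 * (t * φ₁ + (1 - t) * φ₂) := by linarith [hA]
    have hconv' : 0 ≤ (1 - r ^ 2) * (t * (1 - t) * (a₁ - a₂) ^ 2) := by
      have h1 : (0:ℝ) ≤ 1 - r ^ 2 := by nlinarith
      have h2 : (0:ℝ) ≤ t * (1 - t) := mul_nonneg ht hs
      positivity
    have step2 : (1 - r ^ 2) * (t * a₁ + (1 - t) * a₂) ^ 2
          - 2 * r ^ 2 * d * (t * a₁ + (1 - t) * a₂) + (1 - r ^ 2) * d ^ 2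
        ≤ t * ((1 - r ^ 2) * a₁ ^ 2 - 2 * r ^ 2 * d * a₁ + (1 - r ^ 2) * d ^ 2)
          + (1 - t) * ((1 - r ^ 2) * a₂ ^ 2 - 2 * r ^ 2 * d * a₂ + (1 - r ^ 2) * d ^ 2) := by
      linarith [hconv']
    have hmono : 0 ≤ ((t * a₁ + (1 - t) * a₂) - at') *
        ((1 - r ^ 2) * ((t * a₁ + (1 - t) * a₂) + at') - 2 * r ^ 2 * d) := by
      apply mul_nonneg (by linarith)
      have h8 : (1 - r ^ 2) * at' ≤ (1 - r ^ 2) * (t * a₁ + (1 - t) * a₂) := by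
        apply mul_le_mul_of_nonneg_left hatle; nlinarith
      linarith
    have step3 : (1 - r ^ 2) * at' ^ 2 - 2 * r ^ 2 * d * at' + (1 - r ^ 2) * d ^ 2
        ≤ (1 - r ^ 2) * (t * a₁ + (1 - t) * a₂) ^ 2
          - 2 * r ^ 2 * d * (t * a₁ + (1 - t) * a₂) + (1 - r ^ 2) * d ^ 2 := by
      linarith [hmono]
    linarith [step1, step2, step3, hexp]
  exact lt_of_pow_lt_pow_left₀ 2 hrtpos.le hgoal_sq

lemma seg_split {E : Type*} [NormedAddCommGroup E] [InnerProductSpace ℝ E] (a b : E) {t u : ℝ}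
    (h : t + u = 1) :
    (t • a + u • b) - a = u • (b - a) ∧ b - (t • a + u • b) = t • (b - a) := by
  constructor
  · have h1 : (t • a + u • b) - a = (t - 1) • a + u • b := by
      rw [sub_smul, one_smul]; abel
    rw [h1, show t - 1 = -u by linarith, neg_smul, smul_sub]; abel
  · have h1 : b - (t • a + u • b) = (1 - u) • b - t • a := by
      rw [sub_smul, one_smul]; abel
    rw [h1, show 1 - u = t by linarith, smul_sub]

noncomputable def sMetric' {n : ℕ} (G : Set (EuclideanSpace ℝ (Fin n)))
    (x y : EuclideanSpace ℝ (Fin n)) : ℝ :=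
  ⨆ z ∈ frontier G, dist x y / (dist z x + dist z y)

lemma sup_aux_bdd {n : ℕ} (G : Set (EuclideanSpace ℝ (Fin n)))
    (x y : EuclideanSpace ℝ (Fin n)) :
    BddAbove (Set.range fun z => ⨆ _ : z ∈ frontier G, dist x y / (dist z x + dist z y)) := by
  refine ⟨1, ?_⟩
  rintro _ ⟨z, rfl⟩
  show (⨆ _ : z ∈ frontier G, dist x y / (dist z x + dist z y)) ≤ 1
  by_cases hz : z ∈ frontier G
  · rw [ciSup_pos hz]
    rcases eq_or_lt_of_le (add_nonneg dist_nonneg dist_nonneg : (0:ℝ) ≤ dist z x + dist z y)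
      with h | h
    · rw [← h, div_zero]; norm_num
    · rw [div_le_one h]
      have h1 := dist_triangle x z y
      rw [dist_comm x z] at h1; linarith
  · rw [ciSup_neg hz, Real.sSup_empty]; norm_num

lemma le_sMetric' {n : ℕ} (G : Set (EuclideanSpace ℝ (Fin n)))
    (x y z : EuclideanSpace ℝ (Fin n)) (hz : z ∈ frontier G) :
    dist x y / (dist z x + dist z y) ≤ sMetric' G x y :=
  le_ciSup_of_le (sup_aux_bdd G x y) z (by rw [ciSup_pos hz])

lemma sMetric'_le {n : ℕ} (G : Set (EuclideanSpace ℝ (Fin n)))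
    (x y : EuclideanSpace ℝ (Fin n)) {m : ℝ} (hm : 0 ≤ m)
    (h : ∀ z ∈ frontier G, dist x y / (dist z x + dist z y) ≤ m) :
    sMetric' G x y ≤ m := by
  refine ciSup_le fun z => ?_
  show (⨆ _ : z ∈ frontier G, dist x y / (dist z x + dist z y)) ≤ m
  by_cases hz : z ∈ frontier G
  · rw [ciSup_pos hz]; exact h z hz
  · rw [ciSup_neg hz, Real.sSup_empty]; exact hm

section Main

variable {n : ℕ} (i : Fin n)

local notation "ε" => EuclideanSpace.single i (1:ℝ)

lemma eps_apply : (ε : EuclideanSpace ℝ (Fin n)) i = 1 := by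
  simp [EuclideanSpace.single_apply]

lemma inner_eps (w : EuclideanSpace ℝ (Fin n)) : ⟪(ε : EuclideanSpace ℝ (Fin n)), w⟫ = w i := by
  rw [EuclideanSpace.inner_single_left]; simp

lemma frontier_G (hn : 2 ≤ n) :
    frontier ({w : EuclideanSpace ℝ (Fin n) | 0 < w i} \ {ε})
      = {w : EuclideanSpace ℝ (Fin n) | w i = 0} ∪ {ε} := by
  set S : Set (EuclideanSpace ℝ (Fin n)) := {w | 0 < w i} with hS
  have hLw : ∀ w : EuclideanSpace ℝ (Fin n), innerSL ℝ (ε : EuclideanSpace ℝ (Fin n)) w = w i :=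
    fun w => by rw [innerSL_apply_apply, inner_eps]
  have hSeq : S = (innerSL ℝ (ε : EuclideanSpace ℝ (Fin n))) ⁻¹' Set.Ioi 0 := by
    ext w; simp [hS, Set.mem_preimage, hLw, inner_eps]
  have hLsurj : Function.Surjective (innerSL ℝ (ε : EuclideanSpace ℝ (Fin n))) := by
    intro c
    refine ⟨c • ε, ?_⟩
    rw [hLw]
    simp [eps_apply]
  have hSopen : IsOpen S := by
    rw [hSeq]; exact isOpen_Ioi.preimage (innerSL ℝ _).continuous
  have hclS : closure S = {w | 0 ≤ w i} := by
    rw [hSeq, ContinuousLinearMap.closure_preimage _ hLsurj, closure_Ioi]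
    ext w; simp [hLw, inner_eps]
  have hε0 : (ε : EuclideanSpace ℝ (Fin n)) ≠ 0 := by
    intro h
    have h1 := eps_apply i
    rw [h] at h1
    simp at h1
  haveI : Nontrivial (EuclideanSpace ℝ (Fin n)) := ⟨⟨ε, 0, hε0⟩⟩
  have hGopen : IsOpen (S \ {ε}) := hSopen.sdiff isClosed_singleton
  have hclG : closure (S \ {ε}) = closure S := by
    apply subset_antisymm (closure_mono Set.diff_subset)
    have hdense : Dense ({ε}ᶜ : Set (EuclideanSpace ℝ (Fin n))) := dense_compl_singleton _
    have h1 : S ⊆ closure (S ∩ {ε}ᶜ) := hdense.open_subset_closure_inter hSopen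
    rw [← Set.diff_eq] at h1
    calc closure S ⊆ closure (closure (S \ {ε})) := closure_mono h1
    _ = closure (S \ {ε}) := closure_closure
  rw [frontier, hGopen.interior_eq, hclG, hclS]
  ext w
  simp only [Set.mem_diff, Set.mem_setOf_eq, Set.mem_union, Set.mem_singleton_iff, hS]
  constructor
  · rintro ⟨hw0, hw⟩
    rcases eq_or_lt_of_le hw0 with h | h
    · exact Or.inl h.symm
    · right; by_contra hne; exact hw ⟨h, hne⟩
  · rintro (h | rfl)
    · exact ⟨le_of_eq h.symm, fun hc => by rw [h] at hc; exact lt_irrefl 0 hc.1⟩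
    · refine ⟨by rw [eps_apply]; norm_num, fun hc => hc.2 rfl⟩

end Main

section Refl

variable {n : ℕ} (i : Fin n) (x : EuclideanSpace ℝ (Fin n))

lemma refl_sq (w : EuclideanSpace ℝ (Fin n)) :
    dist (x - (2 * x i) • EuclideanSpace.single i (1:ℝ)) w ^ 2
      = dist x w ^ 2 + 4 * x i * w i := by
  rw [dist_eq_norm, dist_eq_norm, sub_right_comm, norm_sub_sq_real]
  have hip : ⟪x - w, (2 * x i) • EuclideanSpace.single i (1:ℝ)⟫ = 2 * x i * (x i - w i) := by
    rw [real_inner_smul_right, real_inner_comm, inner_eps]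
    simp [PiLp.sub_apply]
  have hnε : ‖(2 * x i) • EuclideanSpace.single i (1:ℝ)‖ ^ 2 = (2 * x i) ^ 2 := by
    rw [norm_smul, EuclideanSpace.norm_single]
    simp [Real.norm_eq_abs, mul_pow, sq_abs]
  rw [hip, hnε]; ring

lemma refl_apply : (x - (2 * x i) • EuclideanSpace.single i (1:ℝ)) i = - x i := by
  simp [PiLp.sub_apply, PiLp.smul_apply, EuclideanSpace.single_apply]
  ring

lemma dist_refl_of_base0 (w : EuclideanSpace ℝ (Fin n)) (hw : w i = 0) :
    dist w x = dist w (x - (2 * x i) • EuclideanSpace.single i (1:ℝ)) := by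
  have h := refl_sq i x w
  rw [hw, mul_zero, add_zero] at h
  rw [dist_comm w x, dist_comm w _]
  exact ((sq_eq_sq₀ dist_nonneg dist_nonneg).mp h).symm

end Refl

lemma sMetric_eq_sMetric' {n : ℕ} (G : Set (EuclideanSpace ℝ (Fin n)))
    (x y : EuclideanSpace ℝ (Fin n)) : sMetric G x y = sMetric' G x y := rfl

set_option maxHeartbeats 1000000 in
/-- Let n ≥ 2, G = ℍⁿ \ {eₙ}, x ∈ G and r ∈ (0, 1/2]. Then the metric ball B_s(x,r)
is a convex subset of ℝⁿ. -/
theorem sBall_punctured_halfSpace_convex (n : ℕ) (hn : 2 ≤ n) (i : Fin n)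
    (hi : (i : ℕ) = n - 1) (x : EuclideanSpace ℝ (Fin n))
    (hx : x ∈ {w : EuclideanSpace ℝ (Fin n) | 0 < w i} \ ({EuclideanSpace.single i (1:ℝ)} : Set (EuclideanSpace ℝ (Fin n))))
    (r : ℝ) (hr : r ∈ Set.Ioc (0:ℝ) (1/2)) :
    Convex ℝ (sBall ({w : EuclideanSpace ℝ (Fin n) | 0 < w i} \ ({EuclideanSpace.single i (1:ℝ)} : Set (EuclideanSpace ℝ (Fin n)))) x r) := by
  obtain ⟨hr0, hr2⟩ := hr
  obtain ⟨hxi, hxε⟩ : 0 < x i ∧ x ≠ EuclideanSpace.single i (1:ℝ) := by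
    simpa [Set.mem_diff] using hx
  set e : EuclideanSpace ℝ (Fin n) := EuclideanSpace.single i (1:ℝ) with he
  set G : Set (EuclideanSpace ℝ (Fin n)) := {w | 0 < w i} \ {e} with hG
  set xb : EuclideanSpace ℝ (Fin n) := x - (2 * x i) • e with hxb
  have hfrG : frontier G = {w : EuclideanSpace ℝ (Fin n) | w i = 0} ∪ {e} := frontier_G i hn
  have hxbi : xb i = - x i := refl_apply i x
  have hexd : 0 < dist e x := dist_pos.mpr (Ne.symm hxε)
  have hset : sBall G x r = {y : EuclideanSpace ℝ (Fin n) | dist x y < r * dist xb y}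
      ∩ {y : EuclideanSpace ℝ (Fin n) | dist x y < r * (dist e x + dist e y)} := by
    ext y
    simp only [sBall, Set.mem_setOf_eq, Set.mem_inter_iff, Set.sep_setOf, Set.mem_diff,
      Set.mem_singleton_iff]
    constructor
    · rintro ⟨⟨hyi, hyε⟩, hsup⟩
      have hyi' : 0 < y i := hyi
      rw [sMetric_eq_sMetric'] at hsup
      have hxby : 0 < dist xb y := by
        refine dist_pos.mpr fun h => ?_
        rw [h] at hxbi
        linarith
      have hd2 : 0 < dist e x + dist e y := by linarith [dist_nonneg (x := e) (y := y)]
      constructor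
      · -- use the optimal boundary point on the hyperplane
        set t0 : ℝ := y i / (x i + y i) with ht0
        set u0 : ℝ := x i / (x i + y i) with hu0
        have hxyi : 0 < x i + y i := by linarith
        have htu : t0 + u0 = 1 := by
          rw [ht0, hu0, ← add_div, add_comm (y i), div_self hxyi.ne']
        have ht0pos : 0 ≤ t0 := le_of_lt (div_pos hyi' hxyi)
        have hu0pos : 0 ≤ u0 := le_of_lt (div_pos hxi hxyi)
        set z : EuclideanSpace ℝ (Fin n) := t0 • xb + u0 • y with hz
        have hzi : z i = 0 := by
          have hzi' : z i = t0 * xb i + u0 * y i := by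
            simp [hz, PiLp.add_apply, PiLp.smul_apply]
          rw [hzi', hxbi, ht0, hu0]
          field_simp
          ring
        have hzF : z ∈ frontier G := by rw [hfrG]; left; exact hzi
        have hzx : dist z x = dist z xb := dist_refl_of_base0 i x z hzi
        have h1 : z - xb = u0 • (y - xb) := by
          rw [hz]; exact (seg_split xb y htu).1
        have h2 : y - z = t0 • (y - xb) := by
          rw [hz]; exact (seg_split xb y htu).2
        have hsum : dist z xb + dist z y = dist xb y := by
          rw [dist_eq_norm, dist_eq_norm, dist_eq_norm, norm_sub_rev z y, norm_sub_rev xb y,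
            h1, h2, norm_smul, norm_smul, Real.norm_of_nonneg hu0pos, Real.norm_of_nonneg ht0pos,
            ← add_mul, show u0 + t0 = 1 by linarith, one_mul]
        have h3 := le_sMetric' G x y z hzF
        rw [hzx, hsum] at h3
        have h4 := lt_of_le_of_lt h3 hsup
        rw [div_lt_iff₀ hxby] at h4
        linarith [h4]
      · have h1 := le_sMetric' G x y e (by rw [hfrG]; right; rfl)
        have h2 := lt_of_le_of_lt h1 hsup
        rw [div_lt_iff₀ hd2] at h2
        linarith [h2]
    · rintro ⟨hC1, hC2⟩
      have hsqC1 : dist x y ^ 2 < (r * dist xb y) ^ 2 :=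
        pow_lt_pow_left₀ hC1 dist_nonneg two_ne_zero
      have hrefl := refl_sq i x y
      rw [← he, ← hxb] at hrefl
      have hr14 : r ^ 2 ≤ 1 / 4 := by nlinarith
      have hprod : 0 < x i * y i := by
        nlinarith [hsqC1, hrefl, sq_nonneg (dist x y), hr14, mul_pos hr0 hr0]
      have hyi' : 0 < y i := by nlinarith [hprod, hxi]
      have hyε : y ≠ e := by
        intro h
        rw [h, dist_self, dist_comm x e] at hC2
        nlinarith [hC2, hexd, hr2, hr0]
      refine ⟨⟨hyi', fun hc => hyε hc⟩, ?_⟩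
      rw [sMetric_eq_sMetric']
      have hxby : 0 < dist xb y := by
        refine dist_pos.mpr fun h => ?_
        rw [h] at hxbi
        linarith
      have hd2 : 0 < dist e x + dist e y := by linarith [dist_nonneg (x := e) (y := y)]
      set m : ℝ := max (dist x y / dist xb y) (dist x y / (dist e x + dist e y)) with hm
      have hm0 : 0 ≤ m := le_trans (div_nonneg dist_nonneg dist_nonneg) (le_max_left _ _)
      have hmr : m < r := max_lt ((div_lt_iff₀ hxby).mpr hC1) ((div_lt_iff₀ hd2).mpr hC2)
      refine lt_of_le_of_lt (sMetric'_le G x y hm0 ?_) hmr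
      intro z hz
      rw [hfrG] at hz
      rcases hz with hz0 | hzε
      · have hzx : dist z x = dist z xb := dist_refl_of_base0 i x z hz0
        have htri : dist xb y ≤ dist z xb + dist z y := by
          have h1 := dist_triangle xb z y
          rw [dist_comm xb z] at h1
          linarith
        refine le_trans ?_ (le_max_left _ _)
        rw [hzx]
        exact div_le_div_of_nonneg_left dist_nonneg hxby htri
      · rw [Set.mem_singleton_iff] at hzε
        rw [hzε]
        exact le_max_right _ _
  rw [hset]
  exact (convexC1 x xb r hr0 (by linarith)).inter (convexC2 x e r hr0 hr2 hxε)
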